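/- For every real a, every real x, and every nonnegative integer n, the Charlier polynomial evaluated at x equals the generalized Laguerre polynomial with parameter x − n evaluated at a: C_n^{(a)}(x) = L_n^{(x−n)}(a), where L_n^{(α)}(t) = (1/n!) ∑_{k=0}^n (−n)_k (α+k+1)_{n−k} t^k / k! and (c)_j = c(c+1)⋯(c+j−1) denotes the Pochhammer symbol. -/

import Mathlib

/-- Generalized binomial coefficient `x(x-1)⋯(x-k+1)/k!`. -/
noncomputable def genChoose (x : ℝ) (k : ℕ) : ℝ :=
  (∏ j ∈ Finset.range k, (x - (j : ℝ))) / (Nat.factorial k : ℝ)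

/-- The Charlier polynomial `C_n^{(a)}(x) = ∑_{k=0}^n (x choose k) (-a)^{n-k}/(n-k)!`. -/
noncomputable def charlier (a : ℝ) (n : ℕ) (x : ℝ) : ℝ :=
  ∑ k ∈ Finset.range (n + 1),
    genChoose x k * (-a) ^ (n - k) / (Nat.factorial (n - k) : ℝ)

/-- Charlier polynomial with integer index, with the convention `C_{-1}^{(a)} ≡ 0`. -/
noncomputable def charlierZ (a : ℝ) (n : ℤ) (x : ℝ) : ℝ :=
  if 0 ≤ n then charlier a n.toNat x else 0

/-- Forward difference operator `Δf(x) = f(x+1) - f(x)`. -/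
def fdiff (f : ℝ → ℝ) : ℝ → ℝ := fun x => f (x + 1) - f x

/-- Backward difference operator `∇f(x) = f(x) - f(x-1)`. -/
def bdiff (f : ℝ → ℝ) : ℝ → ℝ := fun x => f x - f (x - 1)

/-- The generalized Charlier polynomial
`C_n^{a,N}(x) = [1 + N(-1)^n C_n^{(a)}(-1)] C_n^{(a)}(x) - N(-1)^n C_n^{(a)}(0) C_n^{(a)}(x-1)`. -/
noncomputable def genCharlier (a N : ℝ) (n : ℕ) (x : ℝ) : ℝ :=
  (1 + N * (-1) ^ n * charlier a n (-1)) * charlier a n x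
    - N * (-1) ^ n * charlier a n 0 * charlier a n (x - 1)

/-- The coefficient `A_i(x)` (for `i ≥ 1`) of the difference equation. -/
noncomputable def Acoef (a : ℝ) (i : ℕ) (x : ℝ) : ℝ :=
  ∑ k ∈ Finset.Icc 1 i, (-1 : ℝ) ^ k * charlier (-a) (i - k) (-x + 1) *
    (charlier a k (-1) * charlier a k (x - 2) - charlier a k (-2) * charlier a k (x - 1))

/-- The coefficient `A_0 = (-1)^{n-1} C_{n-1}^{(a)}(-2)` (with `C_{-1}^{(a)} ≡ 0`). -/
noncomputable def A0coef (a : ℝ) (n : ℕ) : ℝ :=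
  (-1 : ℝ) ^ ((n : ℤ) - 1) * charlierZ a ((n : ℤ) - 1) (-2)

/-- The generalized Laguerre polynomial
`L_n^{(α)}(t) = (1/n!) ∑_{k=0}^n (-n)_k (α+k+1)_{n-k} t^k / k!`. -/
noncomputable def laguerre (n : ℕ) (α : ℝ) (t : ℝ) : ℝ :=
  (1 / (Nat.factorial n : ℝ)) * ∑ k ∈ Finset.range (n + 1),
    (ascPochhammer ℝ k).eval (-(n : ℝ)) * (ascPochhammer ℝ (n - k)).eval (α + k + 1)
      * t ^ k / (Nat.factorial k : ℝ)

lemma asc_eval_prod (x : ℝ) (m : ℕ) :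
    (ascPochhammer ℝ m).eval x = ∏ i ∈ Finset.range m, (x + i) := by
  induction m with
  | zero => simp
  | succ m ih => rw [ascPochhammer_succ_right, Finset.prod_range_succ, ← ih]; simp

lemma prod_desc_eq_asc (x : ℝ) (m : ℕ) :
    ∏ j ∈ Finset.range m, (x - (j : ℝ)) = (ascPochhammer ℝ m).eval (x - m + 1) := by
  rw [asc_eval_prod, ← Finset.prod_range_reflect]
  refine Finset.prod_congr rfl fun j hj => ?_
  rw [Finset.mem_range] at hj
  have : ((m - 1 - j : ℕ) : ℝ) = (m : ℝ) - 1 - j := by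
    push_cast [Nat.cast_sub (by omega : j ≤ m - 1), Nat.cast_sub (by omega : 1 ≤ m)]
    ring
  rw [this]; ring

/-- `C_n^{(a)}(x) = L_n^{(x-n)}(a)`. -/
theorem charlier_eq_laguerre (a x : ℝ) (n : ℕ) :
    charlier a n x = laguerre n (x - (n : ℝ)) a := by
  unfold charlier laguerre
  rw [Finset.mul_sum, ← Finset.sum_range_reflect]
  refine Finset.sum_congr rfl fun k hk => ?_
  rw [Finset.mem_range] at hk
  have hk' : k ≤ n := by omega
  have h1 : n + 1 - 1 - k = n - k := by omega
  have h2 : n - (n - k) = k := by omega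
  rw [h1, h2]
  unfold genChoose
  rw [ascPochhammer_eval_neg_eq_descPochhammer, descPochhammer_eval_eq_descFactorial]
  have h3 : x - (n : ℝ) + k + 1 = x - ((n - k : ℕ) : ℝ) + 1 := by
    rw [Nat.cast_sub hk']; ring
  rw [h3, ← prod_desc_eq_asc x (n - k), neg_pow]
  have h4 : ((n - k).factorial : ℝ) * (n.descFactorial k : ℝ) = (n.factorial : ℝ) := by
    exact_mod_cast congrArg (Nat.cast : ℕ → ℝ) (Nat.factorial_mul_descFactorial hk')
  have f1 : ((n - k).factorial : ℝ) ≠ 0 := Nat.cast_ne_zero.mpr (Nat.factorial_ne_zero _)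
  have f2 : (k.factorial : ℝ) ≠ 0 := Nat.cast_ne_zero.mpr (Nat.factorial_ne_zero _)
  have f3 : (n.factorial : ℝ) ≠ 0 := Nat.cast_ne_zero.mpr (Nat.factorial_ne_zero _)
  field_simp
  linear_combination (-(a^k * (∏ j ∈ Finset.range (n - k), (x - (j:ℝ))))) * h4
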